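/- Let μ, ν, β be real numbers with μ > −1 and ν > μ + 1. Then ∫₀¹ x^μ (1−x)^{ν−μ−2} e^{−β x²} dx = B(ν−μ−1, μ+1) · ₂F₂((μ+1)/2, μ/2 + 1; ν/2, (ν+1)/2; −β). -/

import Mathlib

open MeasureTheory Set

/-- Pochhammer symbol `(c)_n = c(c+1)⋯(c+n−1)` for a real `c`. -/
noncomputable def poch (c : ℝ) (n : ℕ) : ℝ := ∏ i ∈ Finset.range n, (c + i)

/-- The generalized hypergeometric series `₂F₂(a₁,a₂;b₁,b₂;z)`. -/
noncomputable def hyp2F2 (a₁ a₂ b₁ b₂ z : ℝ) : ℝ :=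
  ∑' n : ℕ, poch a₁ n * poch a₂ n / (poch b₁ n * poch b₂ n) * z ^ n / n.factorial

/-- The Beta function `B(x,y) = Γ(x)Γ(y)/Γ(x+y)`. -/
noncomputable def betaFn (x y : ℝ) : ℝ := Real.Gamma x * Real.Gamma y / Real.Gamma (x + y)

lemma poch_succ (c : ℝ) (n : ℕ) : poch c (n + 1) = poch c n * (c + n) := by
  simp [poch, Finset.prod_range_succ]

lemma poch_pos {c : ℝ} (hc : 0 < c) (n : ℕ) : 0 < poch c n :=
  Finset.prod_pos fun i _ => by positivity

lemma Gamma_add_nat {c : ℝ} (hc : 0 < c) (n : ℕ) :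
    Real.Gamma (c + n) = poch c n * Real.Gamma c := by
  induction n with
  | zero => simp [poch]
  | succ n ih =>
    have h : c + ((n : ℕ) + 1 : ℕ) = (c + n) + 1 := by push_cast; ring
    rw [h, Real.Gamma_add_one (by positivity), ih, poch_succ]; ring

lemma poch_double (c : ℝ) (n : ℕ) :
    poch c (2 * n) = 4 ^ n * poch (c / 2) n * poch ((c + 1) / 2) n := by
  induction n with
  | zero => simp [poch]
  | succ n ih =>
    have h : 2 * (n + 1) = (2 * n + 1) + 1 := by ring
    rw [h, poch_succ, poch_succ, ih, poch_succ, poch_succ]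
    push_cast; ring

lemma beta_complex_real {a b : ℝ} (ha : 0 < a) (hb : 0 < b) :
    Complex.betaIntegral a b
      = ((∫ x in Ioo (0:ℝ) 1, x ^ (a - 1) * (1 - x) ^ (b - 1) : ℝ) : ℂ) := by
  rw [Complex.betaIntegral, intervalIntegral.integral_of_le zero_le_one,
    integral_Ioc_eq_integral_Ioo]
  rw [show ((∫ x in Ioo (0:ℝ) 1, x ^ (a - 1) * (1 - x) ^ (b - 1) : ℝ) : ℂ)
      = ∫ x in Ioo (0:ℝ) 1, ((x ^ (a - 1) * (1 - x) ^ (b - 1) : ℝ) : ℂ) from (integral_ofReal).symm]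
  apply setIntegral_congr_fun measurableSet_Ioo
  intro x hx
  simp only [Complex.ofReal_mul, Complex.ofReal_cpow hx.1.le,
    Complex.ofReal_cpow (by linarith [hx.2] : (0:ℝ) ≤ 1 - x)]
  push_cast
  ring

lemma integral_beta {a b : ℝ} (ha : 0 < a) (hb : 0 < b) :
    ∫ x in Ioo (0:ℝ) 1, x ^ (a - 1) * (1 - x) ^ (b - 1) = betaFn a b := by
  have h := Complex.Gamma_mul_Gamma_eq_betaIntegral
    (s := (a : ℂ)) (t := (b : ℂ)) (by simpa using ha) (by simpa using hb)
  rw [beta_complex_real ha hb, ← Complex.ofReal_add, Complex.Gamma_ofReal,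
    Complex.Gamma_ofReal, Complex.Gamma_ofReal, ← Complex.ofReal_mul,
    ← Complex.ofReal_mul, Complex.ofReal_inj] at h
  have hG : Real.Gamma (a + b) ≠ 0 := (Real.Gamma_pos_of_pos (by linarith)).ne'
  rw [betaFn]
  field_simp
  linarith [h]

lemma integrableOn_beta {a b : ℝ} (ha : -1 < a) (hb : -1 < b) :
    IntegrableOn (fun x : ℝ => x ^ a * (1 - x) ^ b) (Ioo 0 1) := by
  have h := Complex.betaIntegral_convergent (u := ((a + 1 : ℝ) : ℂ)) (v := ((b + 1 : ℝ) : ℂ))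
    (by simpa using by linarith) (by simpa using by linarith)
  rw [intervalIntegrable_iff_integrableOn_Ioc_of_le zero_le_one] at h
  have h2 : IntegrableOn
      (fun x : ℝ => ((x ^ a * (1 - x) ^ b : ℝ) : ℂ)) (Ioo 0 1) := by
    apply (h.mono_set Ioo_subset_Ioc_self).congr_fun _ measurableSet_Ioo
    intro x hx
    simp only [Complex.ofReal_mul, Complex.ofReal_cpow hx.1.le,
      Complex.ofReal_cpow (by linarith [hx.2] : (0:ℝ) ≤ 1 - x)]
    push_cast
    ring
  have := h2.re
  exact (by simpa using this : Integrable (fun x : ℝ => x ^ a * (1 - x) ^ b) (volume.restrict (Ioo 0 1)))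

/-- For `μ > −1` and `ν > μ + 1`:
`∫₀¹ x^μ (1−x)^{ν−μ−2} e^{−βx²} dx = B(ν−μ−1,μ+1) ₂F₂((μ+1)/2,μ/2+1;ν/2,(ν+1)/2;−β)`. -/
theorem integral_beta_exp_sq (μ ν β : ℝ) (hμ : -1 < μ) (hν : μ + 1 < ν) :
    ∫ x in Ioo (0:ℝ) 1, x ^ μ * (1 - x) ^ (ν - μ - 2) * Real.exp (-(β * x ^ 2))
      = betaFn (ν - μ - 1) (μ + 1) *
          hyp2F2 ((μ + 1) / 2) (μ / 2 + 1) (ν / 2) ((ν + 1) / 2) (-β) := by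
  have hμ1 : (0:ℝ) < μ + 1 := by linarith
  have hb : (0:ℝ) < ν - μ - 1 := by linarith
  have hν0 : (0:ℝ) < ν := by linarith
  set g : ℝ → ℝ := fun x => x ^ μ * (1 - x) ^ (ν - μ - 2) with hg
  have hgint : IntegrableOn g (Ioo 0 1) := integrableOn_beta hμ (by linarith)
  have hgmeas : AEStronglyMeasurable g (volume.restrict (Ioo (0:ℝ) 1)) := hgint.1
  set F : ℕ → ℝ → ℝ := fun n x => g x * ((-β) ^ n * x ^ (2 * n) / (n.factorial : ℝ)) with hF
  have hgnn : ∀ x ∈ Ioo (0:ℝ) 1, 0 ≤ g x := fun x hx =>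
    mul_nonneg (Real.rpow_nonneg hx.1.le _) (Real.rpow_nonneg (by linarith [hx.2]) _)
  have hFmeas : ∀ n, AEStronglyMeasurable (F n) (volume.restrict (Ioo (0:ℝ) 1)) := by
    intro n
    exact hgmeas.mul (((measurable_id.pow_const (2 * n)).const_mul
      ((-β) ^ n)).div_const _).aestronglyMeasurable
  have hFbound : ∀ n, ∀ x ∈ Ioo (0:ℝ) 1, ‖F n x‖ ≤ (|β| ^ n / (n.factorial : ℝ)) * g x := by
    intro n x hx
    have hx1 : |x| ≤ 1 := abs_le.2 ⟨by linarith [hx.1], hx.2.le⟩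
    have heq : ‖F n x‖ = g x * (|β| ^ n * |x| ^ (2 * n) / (n.factorial : ℝ)) := by
      rw [hF]
      simp only [Real.norm_eq_abs, abs_mul, abs_div, abs_pow, abs_neg,
        abs_of_nonneg (hgnn x hx), Nat.abs_cast]
    rw [heq]
    have h1 : |x| ^ (2 * n) ≤ 1 := pow_le_one₀ (abs_nonneg x) hx1
    have h2 : |β| ^ n * |x| ^ (2 * n) / (n.factorial : ℝ) ≤ |β| ^ n / (n.factorial : ℝ) := by
      gcongr
      nlinarith [pow_nonneg (abs_nonneg β) n, pow_nonneg (abs_nonneg x) (2 * n)]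
    calc g x * (|β| ^ n * |x| ^ (2 * n) / (n.factorial : ℝ))
        ≤ g x * (|β| ^ n / (n.factorial : ℝ)) :=
          mul_le_mul_of_nonneg_left h2 (hgnn x hx)
      _ = (|β| ^ n / (n.factorial : ℝ)) * g x := by ring
  have hFint : ∀ n, IntegrableOn (F n) (Ioo (0:ℝ) 1) := by
    intro n
    apply Integrable.mono' (hgint.const_mul (|β| ^ n / (n.factorial : ℝ))) (hFmeas n)
    rw [ae_restrict_iff' measurableSet_Ioo]
    exact ae_of_all _ fun x hx => hFbound n x hx
  have hnorm : ∀ n, (∫ x in Ioo (0:ℝ) 1, ‖F n x‖)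
      ≤ (|β| ^ n / (n.factorial : ℝ)) * ∫ x in Ioo (0:ℝ) 1, g x := by
    intro n
    rw [← integral_const_mul]
    exact setIntegral_mono_on (hFint n).norm (hgint.const_mul _) measurableSet_Ioo
      (fun x hx => hFbound n x hx)
  have hsum : Summable (fun n => ∫ x in Ioo (0:ℝ) 1, ‖F n x‖) := by
    apply Summable.of_nonneg_of_le
      (fun n => integral_nonneg fun x => norm_nonneg _) hnorm
    exact (Real.summable_pow_div_factorial |β|).mul_right _
  have key : EqOn (fun x : ℝ => x ^ μ * (1 - x) ^ (ν - μ - 2) * Real.exp (-(β * x ^ 2)))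
      (fun x => ∑' n, F n x) (Ioo (0:ℝ) 1) := by
    intro x hx
    simp only
    rw [Real.exp_eq_exp_ℝ, NormedSpace.exp_eq_tsum_div, ← tsum_mul_left]
    refine tsum_congr fun n => ?_
    rw [hF]; simp only
    rw [show -(β * x ^ 2) = -β * x ^ 2 by ring, mul_pow, ← pow_mul]
    try ring
  rw [setIntegral_congr_fun measurableSet_Ioo key,
    ← integral_tsum_of_summable_integral_norm hFint hsum]
  have hterm : ∀ n : ℕ, (∫ x in Ioo (0:ℝ) 1, F n x)
      = betaFn (ν - μ - 1) (μ + 1) *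
        (poch ((μ + 1) / 2) n * poch (μ / 2 + 1) n /
          (poch (ν / 2) n * poch ((ν + 1) / 2) n) * (-β) ^ n / (n.factorial : ℝ)) := by
    intro n
    have h1 : (∫ x in Ioo (0:ℝ) 1, F n x)
        = ((-β) ^ n / (n.factorial : ℝ)) *
          ∫ x in Ioo (0:ℝ) 1, x ^ (μ + ((2 * n : ℕ) : ℝ)) * (1 - x) ^ (ν - μ - 2) := by
      rw [← integral_const_mul]
      apply setIntegral_congr_fun measurableSet_Ioo
      intro x hx
      rw [hF]; simp only
      rw [Real.rpow_add hx.1, Real.rpow_natCast]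
      ring
    have h2 : (∫ x in Ioo (0:ℝ) 1, x ^ (μ + ((2 * n : ℕ) : ℝ)) * (1 - x) ^ (ν - μ - 2))
        = betaFn (μ + ((2 * n : ℕ) : ℝ) + 1) (ν - μ - 1) := by
      have hpos : (0:ℝ) < μ + ((2 * n : ℕ) : ℝ) + 1 := by
        have : (0:ℝ) ≤ ((2 * n : ℕ) : ℝ) := Nat.cast_nonneg _
        linarith
      have hA := integral_beta (a := μ + ((2 * n : ℕ) : ℝ) + 1) (b := ν - μ - 1) hpos hb
      rw [show μ + ((2 * n : ℕ) : ℝ) + 1 - 1 = μ + ((2 * n : ℕ) : ℝ) from by ring,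
        show ν - μ - 1 - 1 = ν - μ - 2 from by ring] at hA
      exact hA
    have h3 : betaFn (μ + ((2 * n : ℕ) : ℝ) + 1) (ν - μ - 1)
        = betaFn (ν - μ - 1) (μ + 1) * (poch (μ + 1) (2 * n) / poch ν (2 * n)) := by
      rw [betaFn, betaFn]
      rw [show μ + ((2 * n : ℕ) : ℝ) + 1 = (μ + 1) + ((2 * n : ℕ) : ℝ) from by ring,
        Gamma_add_nat hμ1]
      rw [show (μ + 1) + ((2 * n : ℕ) : ℝ) + (ν - μ - 1) = ν + ((2 * n : ℕ) : ℝ) from by ring,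
        Gamma_add_nat hν0]
      rw [show ν - μ - 1 + (μ + 1) = ν from by ring]
      have hGν : Real.Gamma ν ≠ 0 := (Real.Gamma_pos_of_pos hν0).ne'
      have hpν : poch ν (2 * n) ≠ 0 := (poch_pos hν0 (2 * n)).ne'
      field_simp
    have h4 : poch (μ + 1) (2 * n) / poch ν (2 * n)
        = poch ((μ + 1) / 2) n * poch (μ / 2 + 1) n /
            (poch (ν / 2) n * poch ((ν + 1) / 2) n) := by
      rw [poch_double, poch_double, show (μ + 1 + 1) / 2 = μ / 2 + 1 from by ring,
        mul_assoc, mul_assoc, mul_div_mul_left _ _ (by positivity : (4:ℝ) ^ n ≠ 0)]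
    rw [h1, h2, h3, h4]
    ring
  rw [hyp2F2, ← tsum_mul_left]
  exact tsum_congr hterm
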